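/- Let G be a t.d.l.c. group that is the increasing union of a countable chain of compact open subgroups O₀ ⊆ O₁ ⊆ O₂ ⊆ ⋯ (a nested group). Then cd_Q(G) ≤ 1. -/

import Mathlib

universe u

/-- A discrete `ℚ[G]`-module over a topological group `G`: a `ℚ`-vector space with
a `ℚ`-linear `G`-action in which every element has open stabilizer. -/
structure DiscGMod (G : Type u) [Group G] [TopologicalSpace G] : Type (u + 1) where
  carrier : Type u
  [acg : AddCommGroup carrier]
  [mod : Module ℚ carrier]
  [act : DistribMulAction G carrier]
  [cmm : SMulCommClass G ℚ carrier]
  discrete : ∀ m : carrier, IsOpen ((MulAction.stabilizer G m : Subgroup G) : Set G)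

attribute [instance] DiscGMod.acg DiscGMod.mod DiscGMod.act DiscGMod.cmm

/-- A morphism of discrete `ℚ[G]`-modules is a `G`-equivariant `ℚ`-linear map. -/
def DiscGMod.Equivariant {G : Type u} [Group G] [TopologicalSpace G]
    {A B : DiscGMod G} (f : A.carrier →ₗ[ℚ] B.carrier) : Prop :=
  ∀ (g : G) (a : A.carrier), f (g • a) = g • f a

/-- Projectivity, relative to the category of discrete `ℚ[G]`-modules, of a
`ℚ`-module `P` equipped with a `G`-action `σ`: every equivariant map from `P` to a
discrete module lifts along every equivariant surjection of discrete modules. -/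
def ProjOverDiscrete (G : Type u) [Group G] [TopologicalSpace G]
    (P : Type u) [AddCommGroup P] [Module ℚ P] (σ : G → P → P) : Prop :=
  ∀ (A B : DiscGMod G) (π : B.carrier →ₗ[ℚ] A.carrier),
    DiscGMod.Equivariant π → Function.Surjective π →
    ∀ φ : P →ₗ[ℚ] A.carrier, (∀ (g : G) (x : P), φ (σ g x) = g • φ x) →
    ∃ ψ : P →ₗ[ℚ] B.carrier, (∀ (g : G) (x : P), ψ (σ g x) = g • ψ x) ∧ π.comp ψ = φ

/-- `P` is projective in the category of discrete `ℚ[G]`-modules. -/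
def DiscGMod.IsProjectiveObj {G : Type u} [Group G] [TopologicalSpace G]
    (P : DiscGMod G) : Prop :=
  ProjOverDiscrete G P.carrier (fun g m => g • m)


set_option linter.unusedSectionVars false

section Aux
variable {G : Type u} [Group G] [TopologicalSpace G] [IsTopologicalGroup G]

/-- Vertices: disjoint union of the coset spaces `G ⧸ O k`. -/
abbrev NVert (O : ℕ → Subgroup G) : Type u := Σ k : ℕ, G ⧸ O k

variable (O : ℕ → Subgroup G) (hmono : ∀ k, O k ≤ O (k + 1))

/-- Push a vertex one level up. -/
def npush : NVert O → NVert O := fun v =>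
  ⟨v.1 + 1, Quotient.liftOn' v.2 QuotientGroup.mk (fun a b hab => by
    rw [QuotientGroup.leftRel_apply] at hab
    exact QuotientGroup.eq.mpr (hmono v.1 hab))⟩

lemma npush_mk (k : ℕ) (g : G) :
    npush O hmono ⟨k, QuotientGroup.mk g⟩ = ⟨k + 1, QuotientGroup.mk g⟩ := rfl

lemma smul_nvert_mk (g : G) (k : ℕ) (h : G) :
    g • (⟨k, QuotientGroup.mk h⟩ : NVert O) = ⟨k, QuotientGroup.mk (g * h)⟩ := rfl

lemma npush_smul (g : G) (v : NVert O) :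
    npush O hmono (g • v) = g • npush O hmono v := by
  obtain ⟨k, x⟩ := v
  induction x using QuotientGroup.induction_on with
  | _ h => rfl

lemma nvert_eq_of {k k' : ℕ} (h : k = k') (g : G) :
    (⟨k, QuotientGroup.mk g⟩ : NVert O) = ⟨k', QuotientGroup.mk g⟩ := by subst h; rfl

lemma npush_iterate_mk (n k : ℕ) (g : G) :
    (npush O hmono)^[n] ⟨k, QuotientGroup.mk g⟩ = ⟨k + n, QuotientGroup.mk g⟩ := by
  induction n with
  | zero => rfl
  | succ n ih =>
    rw [Function.iterate_succ_apply', ih, npush_mk]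
    exact nvert_eq_of O rfl g

lemma isOpen_stab_nvert (hopen : ∀ k, IsOpen ((O k : Set G))) (v : NVert O) :
    IsOpen ((MulAction.stabilizer G v : Subgroup G) : Set G) := by
  obtain ⟨k, x⟩ := v
  induction x using QuotientGroup.induction_on with
  | _ h =>
    have hset : ((MulAction.stabilizer G (⟨k, QuotientGroup.mk h⟩ : NVert O) : Subgroup G) : Set G)
        = (fun g : G => (g * h)⁻¹ * h) ⁻¹' (O k : Set G) := by
      ext g
      simp only [SetLike.mem_coe, MulAction.mem_stabilizer_iff, Set.mem_preimage,
        smul_nvert_mk]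
      constructor
      · intro hg
        exact QuotientGroup.eq.mp (by simpa using hg)
      · intro hg
        exact congrArg (fun x => (⟨k, x⟩ : NVert O)) (QuotientGroup.eq.mpr hg)
    rw [hset]
    exact (hopen k).preimage (by continuity)

end Aux
section Mod
variable {G : Type u} [Group G] [TopologicalSpace G] [IsTopologicalGroup G]
variable (O : ℕ → Subgroup G)

noncomputable instance nact : DistribMulAction G (NVert O →₀ ℚ) :=
  Finsupp.comapDistribMulAction

instance ncmm : SMulCommClass G ℚ (NVert O →₀ ℚ) where
  smul_comm g q m := by
    rw [Finsupp.comapSMul_def, Finsupp.comapSMul_def, Finsupp.mapDomain_smul]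

lemma nsmul_single (g : G) (v : NVert O) (c : ℚ) :
    g • (Finsupp.single v c : NVert O →₀ ℚ) = Finsupp.single (g • v) c :=
  Finsupp.comapSMul_single g v c

lemma isOpen_stab_nfinsupp (hopen : ∀ k, IsOpen ((O k : Set G))) (m : NVert O →₀ ℚ) :
    IsOpen ((MulAction.stabilizer G m : Subgroup G) : Set G) := by
  have hKopen : IsOpen ((⨅ v ∈ m.support, MulAction.stabilizer G v : Subgroup G) : Set G) := by
    have hs : ((⨅ v ∈ m.support, MulAction.stabilizer G v : Subgroup G) : Set G)
        = ⋂ v ∈ m.support, ((MulAction.stabilizer G v : Subgroup G) : Set G) := by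
      simp [Subgroup.coe_iInf]
    rw [hs]
    exact Set.Finite.isOpen_biInter m.support.finite_toSet
      (fun v _ => isOpen_stab_nvert O hopen v)
  refine Subgroup.isOpen_mono ?_ hKopen
  intro g hg
  simp only [Subgroup.mem_iInf] at hg
  have hfix : ∀ v ∈ m.support, g • v = id v := fun v hv => hg v hv
  show g • m = m
  rw [Finsupp.comapSMul_def, Finsupp.mapDomain_congr hfix, Finsupp.mapDomain_id]

/-- `P₀ = P₁`: the discrete module `ℚ[⊔ₖ G/Oₖ]`. -/
noncomputable def NPmod (hopen : ∀ k, IsOpen ((O k : Set G))) : DiscGMod G where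
  carrier := NVert O →₀ ℚ
  act := nact O
  cmm := ncmm O
  discrete := isOpen_stab_nfinsupp O hopen

end Mod
section Maps
variable {G : Type u} [Group G] [TopologicalSpace G] [IsTopologicalGroup G]
variable (O : ℕ → Subgroup G) (hmono : ∀ k, O k ≤ O (k + 1))

/-- Augmentation: sum of coefficients. -/
noncomputable def neps : (NVert O →₀ ℚ) →ₗ[ℚ] ℚ :=
  Finsupp.lift ℚ ℚ (NVert O) (fun _ => 1)

/-- The differential `δ_v ↦ δ_v - δ_{push v}`. -/
noncomputable def ndiff : (NVert O →₀ ℚ) →ₗ[ℚ] (NVert O →₀ ℚ) :=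
  LinearMap.id - Finsupp.lmapDomain ℚ ℚ (npush O hmono)

lemma neps_single (v : NVert O) (c : ℚ) : neps O (Finsupp.single v c) = c := by
  simp [neps, Finsupp.lift_apply, Finsupp.sum_single_index]

lemma ndiff_single (v : NVert O) (c : ℚ) :
    ndiff O hmono (Finsupp.single v c)
      = Finsupp.single v c - Finsupp.single (npush O hmono v) c := by
  simp [ndiff, LinearMap.sub_apply, Finsupp.lmapDomain_apply, Finsupp.mapDomain_single]

lemma neps_equivariant (g : G) (m : NVert O →₀ ℚ) : neps O (g • m) = neps O m := by
  have h : (neps O).comp (DistribSMul.toLinearMap ℚ (NVert O →₀ ℚ) g) = neps O := by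
    apply Finsupp.lhom_ext
    intro v c
    simp [LinearMap.comp_apply, DistribSMul.toLinearMap_apply, nsmul_single, neps_single]
  exact LinearMap.congr_fun h m

lemma ndiff_equivariant (g : G) (m : NVert O →₀ ℚ) :
    ndiff O hmono (g • m) = g • ndiff O hmono m := by
  have h : (ndiff O hmono).comp (DistribSMul.toLinearMap ℚ (NVert O →₀ ℚ) g)
      = (DistribSMul.toLinearMap ℚ (NVert O →₀ ℚ) g).comp (ndiff O hmono) := by
    apply Finsupp.lhom_ext
    intro v c
    simp [LinearMap.comp_apply, DistribSMul.toLinearMap_apply, nsmul_single,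
      ndiff_single, smul_sub, npush_smul]
  exact LinearMap.congr_fun h m

lemma ndiff_injective : Function.Injective (ndiff O hmono) := by
  classical
  rw [← LinearMap.ker_eq_bot, LinearMap.ker_eq_bot']
  intro m hm
  by_contra hne
  have hsupp : m.support.Nonempty := Finsupp.support_nonempty_iff.mpr hne
  obtain ⟨v, hv, hmin⟩ := Finset.exists_min_image m.support (fun v => v.1) hsupp
  have hm' : m - Finsupp.mapDomain (npush O hmono) m = 0 := by
    simpa [ndiff, LinearMap.sub_apply, Finsupp.lmapDomain_apply] using hm
  have heq : m = Finsupp.mapDomain (npush O hmono) m := by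
    have := sub_eq_zero.mp hm'
    exact this
  have hv2 : v ∈ (Finsupp.mapDomain (npush O hmono) m).support := by rw [← heq]; exact hv
  obtain ⟨w, hw, hwv⟩ := Finset.mem_image.mp (Finsupp.mapDomain_support hv2)
  have h1 : w.1 + 1 = v.1 := by rw [← hwv]; rfl
  have h2 := hmin w hw
  omega

lemma neps_comp_ndiff : (neps O).comp (ndiff O hmono) = 0 := by
  apply Finsupp.lhom_ext
  intro v c
  simp [LinearMap.comp_apply, ndiff_single, map_sub, neps_single]

lemma iter_mem (n : ℕ) (v : NVert O) :
    Finsupp.single v (1:ℚ) - Finsupp.single ((npush O hmono)^[n] v) 1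
      ∈ LinearMap.range (ndiff O hmono) := by
  induction n with
  | zero => simp
  | succ n ih =>
    have h2 : Finsupp.single ((npush O hmono)^[n] v) (1:ℚ)
        - Finsupp.single ((npush O hmono)^[n+1] v) 1 ∈ LinearMap.range (ndiff O hmono) :=
      ⟨Finsupp.single ((npush O hmono)^[n] v) 1, by
        rw [ndiff_single, Function.iterate_succ_apply']⟩
    have h3 := add_mem ih h2
    rwa [sub_add_sub_cancel] at h3

lemma basis_diff_mem (hunion : ∀ g : G, ∃ k, g ∈ O k) (v : NVert O) :
    Finsupp.single v (1:ℚ) - Finsupp.single (⟨0, QuotientGroup.mk 1⟩ : NVert O) 1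
      ∈ LinearMap.range (ndiff O hmono) := by
  have hOm : Monotone O := monotone_nat_of_le_succ hmono
  obtain ⟨k, x⟩ := v
  induction x using QuotientGroup.induction_on with
  | _ g =>
    obtain ⟨j, hj⟩ := hunion g
    have hgN : g ∈ O (max k j) := hOm (le_max_right k j) hj
    have h1 : (npush O hmono)^[max k j - k] ⟨k, QuotientGroup.mk g⟩
        = ⟨max k j, QuotientGroup.mk g⟩ := by
      rw [npush_iterate_mk]; exact nvert_eq_of O (by omega) g
    have h2 : (npush O hmono)^[max k j] ⟨0, QuotientGroup.mk (1:G)⟩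
        = ⟨max k j, QuotientGroup.mk (1:G)⟩ := by
      rw [npush_iterate_mk]; exact nvert_eq_of O (by omega) 1
    have hgg : (⟨max k j, QuotientGroup.mk g⟩ : NVert O)
        = ⟨max k j, QuotientGroup.mk (1:G)⟩ :=
      congrArg (fun x => (⟨max k j, x⟩ : NVert O))
        (QuotientGroup.eq.mpr (by simpa using inv_mem hgN))
    have m1 := iter_mem O hmono (max k j - k) ⟨k, QuotientGroup.mk g⟩
    have m2 := iter_mem O hmono (max k j) ⟨0, QuotientGroup.mk (1:G)⟩
    rw [h1, hgg] at m1
    rw [h2] at m2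
    have h3 := sub_mem m1 m2
    rwa [sub_sub_sub_cancel_right] at h3

lemma nrange_eq_ker (hunion : ∀ g : G, ∃ k, g ∈ O k) :
    LinearMap.range (ndiff O hmono) = LinearMap.ker (neps O) := by
  apply le_antisymm
  · rintro _ ⟨m, rfl⟩
    exact LinearMap.congr_fun (neps_comp_ndiff O hmono) m
  · have main : ∀ m : NVert O →₀ ℚ,
        m - neps O m • Finsupp.single (⟨0, QuotientGroup.mk 1⟩ : NVert O) (1:ℚ)
          ∈ LinearMap.range (ndiff O hmono) := by
      intro m
      induction m using Finsupp.induction_linear with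
      | zero => simp
      | add f g hf hg =>
        have h3 := add_mem hf hg
        rw [map_add, add_smul]
        convert h3 using 1
        abel
      | single v c =>
        have h4 := Submodule.smul_mem (LinearMap.range (ndiff O hmono)) c
          (basis_diff_mem O hmono hunion v)
        rw [neps_single]
        convert h4 using 1
        rw [smul_sub, Finsupp.smul_single, smul_eq_mul, mul_one,
          Finsupp.smul_single, smul_eq_mul, mul_one]
    intro m hm
    have h5 := main m
    rw [LinearMap.mem_ker] at hm
    rwa [hm, zero_smul, sub_zero] at h5

lemma neps_surjective : Function.Surjective (neps O) := fun q =>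
  ⟨Finsupp.single (⟨0, QuotientGroup.mk 1⟩ : NVert O) q, neps_single O _ q⟩

end Maps
section Proj
open Pointwise
variable {G : Type u} [Group G] [TopologicalSpace G] [IsTopologicalGroup G]

/-- Averaging over a compact subgroup: `U`-invariant elements lift along equivariant
surjections of discrete modules. -/
lemma averaging (U : Subgroup G) (hU : IsCompact (U : Set G))
    (A B : DiscGMod G) (π : B.carrier →ₗ[ℚ] A.carrier)
    (hπ : DiscGMod.Equivariant π) (hs : Function.Surjective π)
    (a : A.carrier) (ha : ∀ u ∈ U, u • a = a) :
    ∃ b : B.carrier, π b = a ∧ ∀ u ∈ U, u • b = b := by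
  classical
  obtain ⟨b₀, hb₀⟩ := hs a
  have hSopen : IsOpen ((MulAction.stabilizer G b₀ : Subgroup G) : Set G) := B.discrete b₀
  have hcover : (U : Set G) ⊆ ⋃ g : G, g • ((MulAction.stabilizer G b₀ : Subgroup G) : Set G) := by
    intro u _
    exact Set.mem_iUnion.mpr ⟨u, Set.mem_smul_set.mpr
      ⟨1, (MulAction.stabilizer G b₀).one_mem, by simp⟩⟩
  obtain ⟨t, ht⟩ := hU.elim_finite_subcover
    (fun g : G => g • ((MulAction.stabilizer G b₀ : Subgroup G) : Set G))
    (fun g => hSopen.smul g) hcover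
  have horbfin : Set.Finite ((fun u : G => u • b₀) '' (U : Set G)) := by
    apply Set.Finite.subset (Set.Finite.image (fun g : G => g • b₀) t.finite_toSet)
    rintro _ ⟨u, hu, rfl⟩
    obtain ⟨g, hgt, hug⟩ := Set.mem_iUnion₂.mp (ht hu)
    obtain ⟨s, hsS, rfl⟩ := Set.mem_smul_set.mp hug
    refine ⟨g, hgt, ?_⟩
    show g • b₀ = (g * s) • b₀
    rw [mul_smul, (MulAction.mem_stabilizer_iff).mp hsS]
  set F : Finset B.carrier := horbfin.toFinset with hF
  have hb₀F : b₀ ∈ F := by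
    rw [hF, Set.Finite.mem_toFinset]
    exact ⟨1, U.one_mem, one_smul G b₀⟩
  have hn : ((F.card : ℚ)) ≠ 0 :=
    Nat.cast_ne_zero.mpr (Finset.card_ne_zero_of_mem hb₀F)
  refine ⟨(F.card : ℚ)⁻¹ • ∑ x ∈ F, x, ?_, ?_⟩
  · have hπx : ∀ x ∈ F, π x = a := by
      intro x hx
      rw [hF, Set.Finite.mem_toFinset] at hx
      obtain ⟨u, hu, rfl⟩ := hx
      show π (u • b₀) = a
      rw [hπ u b₀, hb₀]
      exact ha u hu
    rw [map_smul, map_sum, Finset.sum_congr rfl hπx, Finset.sum_const,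
      ← Nat.cast_smul_eq_nsmul ℚ, smul_smul, inv_mul_cancel₀ hn, one_smul]
  · intro u hu
    have himg : ∀ x ∈ F, u • x ∈ F := by
      intro x hx
      rw [hF, Set.Finite.mem_toFinset] at hx ⊢
      obtain ⟨w, hw, rfl⟩ := hx
      exact ⟨u * w, U.mul_mem hu hw, mul_smul u w b₀⟩
    have hinj : ∀ x ∈ F, ∀ y ∈ F, u • x = u • y → x = y :=
      fun x _ y _ h => MulAction.injective u h
    have himage : F.image (fun x => u • x) = F := by
      apply Finset.eq_of_subset_of_card_le
      · intro y hy
        obtain ⟨x, hx, rfl⟩ := Finset.mem_image.mp hy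
        exact himg x hx
      · rw [Finset.card_image_of_injOn hinj]
    have hsum : (∑ x ∈ F, u • x) = ∑ x ∈ F, x := by
      conv_rhs => rw [← himage]
      rw [Finset.sum_image hinj]
    rw [smul_comm, Finset.smul_sum, hsum]

variable (O : ℕ → Subgroup G)

lemma nproj (hcpt : ∀ k, IsCompact ((O k : Set G))) :
    ProjOverDiscrete G (NVert O →₀ ℚ) (fun g m => g • m) := by
  classical
  intro A B π hπ hπs φ hφ
  have hvfix : ∀ (k : ℕ), ∀ u ∈ O k,
      u • (⟨k, QuotientGroup.mk 1⟩ : NVert O) = ⟨k, QuotientGroup.mk 1⟩ := by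
    intro k u hu
    rw [smul_nvert_mk, mul_one]
    exact congrArg (fun x => (⟨k, x⟩ : NVert O))
      (QuotientGroup.eq.mpr (by simpa using inv_mem hu))
  have ha : ∀ (k : ℕ), ∀ u ∈ O k,
      u • φ (Finsupp.single (⟨k, QuotientGroup.mk 1⟩ : NVert O) 1)
        = φ (Finsupp.single (⟨k, QuotientGroup.mk 1⟩ : NVert O) 1) := by
    intro k u hu
    rw [← hφ u]
    show φ (u • Finsupp.single (⟨k, QuotientGroup.mk 1⟩ : NVert O) 1) = _
    rw [nsmul_single, hvfix k u hu]
  have hex : ∀ k : ℕ, ∃ b : B.carrier,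
      π b = φ (Finsupp.single (⟨k, QuotientGroup.mk 1⟩ : NVert O) 1) ∧
      ∀ u ∈ O k, u • b = b :=
    fun k => averaging (O k) (hcpt k) A B π hπ hπs _ (ha k)
  choose b hπb hbinv using hex
  let Bof : NVert O → B.carrier := fun v => Quotient.liftOn' v.2 (fun g => g • b v.1)
    (fun x y hxy => by
      rw [QuotientGroup.leftRel_apply] at hxy
      show x • b v.1 = y • b v.1
      have hyx : y = x * (x⁻¹ * y) := by group
      rw [hyx, mul_smul, hbinv v.1 _ hxy])
  have Bof_mk : ∀ (k : ℕ) (g : G), Bof ⟨k, QuotientGroup.mk g⟩ = g • b k := fun _ _ => rfl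
  have Bof_smul : ∀ (g : G) (v : NVert O), Bof (g • v) = g • Bof v := by
    intro g v
    obtain ⟨k, x⟩ := v
    induction x using QuotientGroup.induction_on with
    | _ h => rw [smul_nvert_mk, Bof_mk, Bof_mk, mul_smul]
  have hlift : ∀ (v : NVert O) (c : ℚ),
      (Finsupp.lift B.carrier ℚ (NVert O) Bof) (Finsupp.single v c) = c • Bof v := by
    intro v c
    simp [Finsupp.lift_apply, Finsupp.sum_single_index]
  refine ⟨Finsupp.lift B.carrier ℚ (NVert O) Bof, ?_, ?_⟩
  · intro g m
    have h : ((Finsupp.lift B.carrier ℚ (NVert O) Bof :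
          (NVert O →₀ ℚ) →ₗ[ℚ] B.carrier)).comp
          (DistribSMul.toLinearMap ℚ (NVert O →₀ ℚ) g)
        = (DistribSMul.toLinearMap ℚ B.carrier g).comp
          (Finsupp.lift B.carrier ℚ (NVert O) Bof) := by
      apply Finsupp.lhom_ext
      intro v c
      simp only [LinearMap.comp_apply, DistribSMul.toLinearMap_apply,
        nsmul_single, hlift, Bof_smul]
      rw [smul_comm]
    exact LinearMap.congr_fun h m
  · apply Finsupp.lhom_ext
    intro v c
    obtain ⟨k, x⟩ := v
    induction x using QuotientGroup.induction_on with
    | _ g =>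
      rw [LinearMap.comp_apply, hlift, Bof_mk, map_smul, hπ, hπb k, ← hφ g]
      show c • φ (g • Finsupp.single (⟨k, QuotientGroup.mk 1⟩ : NVert O) 1) = _
      rw [nsmul_single, smul_nvert_mk, mul_one, ← map_smul, Finsupp.smul_single,
        smul_eq_mul, mul_one]

end Proj

/-- Let `G` be a nested t.d.l.c. group, i.e. the union of a
countable increasing chain of compact open subgroups.  Then `cd_ℚ(G) ≤ 1`: the
trivial discrete `ℚ[G]`-module `ℚ` admits a projective resolution
`0 → P₁ → P₀ → ℚ → 0` of length `1` in the category of discrete `ℚ[G]`-modules. -/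
theorem nested_cd_le_one (G : Type u) [Group G] [TopologicalSpace G]
    [IsTopologicalGroup G] [TotallyDisconnectedSpace G] [LocallyCompactSpace G]
    (O : ℕ → Subgroup G)
    (hmono : ∀ k, O k ≤ O (k + 1))
    (hopen : ∀ k, IsOpen ((O k : Set G)))
    (hcpt : ∀ k, IsCompact ((O k : Set G)))
    (hunion : ∀ g : G, ∃ k, g ∈ O k) :
    ∃ (P₀ P₁ : DiscGMod G) (d : P₁.carrier →ₗ[ℚ] P₀.carrier)
      (ε : P₀.carrier →ₗ[ℚ] ℚ),
      DiscGMod.Equivariant d ∧ (∀ (g : G) (x : P₀.carrier), ε (g • x) = ε x) ∧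
      Function.Injective d ∧ LinearMap.range d = LinearMap.ker ε ∧
      Function.Surjective ε ∧
      P₀.IsProjectiveObj ∧ P₁.IsProjectiveObj := by
  refine ⟨NPmod O hopen, NPmod O hopen, ndiff O hmono, neps O,
    ?_, ?_, ?_, ?_, ?_, ?_, ?_⟩
  · exact fun g m => ndiff_equivariant O hmono g m
  · exact fun g m => neps_equivariant O g m
  · exact ndiff_injective O hmono
  · exact nrange_eq_ker O hmono hunion
  · exact neps_surjective O
  · exact nproj O hcpt
  · exact nproj O hcpt
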